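/- Let Ω ⊆ ℝ^{n+1} contain (0,…,0,1) and suppose the closure 𝓘(Ω) is nonempty. Then 𝓘(Ω) is full-dimensional (has nonempty interior in ℝ^n) if and only if cl cone(Ω) is a pointed closed convex cone, i.e., cl cone(Ω) ∩ (−cl cone(Ω)) = {0}. -/
import Mathlib


open Pointwise

noncomputable section

/-- The conical hull of a set: all finite nonnegative combinations of its elements. -/
def coneHull {E : Type*} [AddCommMonoid E] [Module ℝ E] (Ω : Set E) : Set E :=
  {y | ∃ (k : ℕ) (c : Fin k → ℝ) (v : Fin k → E),
    (∀ i, 0 ≤ c i) ∧ (∀ i, v i ∈ Ω) ∧ y = ∑ i, c i • v i}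

/-- The cutting-plane closure 𝓘(Ω) of a family Ω ⊆ ℝ^n × ℝ of inequalities. -/
def cutClosure {n : ℕ} (Ω : Set ((Fin n → ℝ) × ℝ)) : Set (Fin n → ℝ) :=
  {x | ∀ p ∈ Ω, ∑ i, p.1 i * x i ≤ p.2}

section Aux

variable {E : Type*} [AddCommMonoid E] [Module ℝ E] {Ω : Set E}

lemma zero_mem_coneHull : (0 : E) ∈ coneHull Ω :=
  ⟨0, Fin.elim0, Fin.elim0, fun i => i.elim0, fun i => i.elim0, by simp⟩

lemma smul_mem_coneHull {c : ℝ} (hc : 0 ≤ c) {y : E} (hy : y ∈ coneHull Ω) :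
    c • y ∈ coneHull Ω := by
  obtain ⟨k, d, v, hd, hv, rfl⟩ := hy
  exact ⟨k, fun i => c * d i, v, fun i => mul_nonneg hc (hd i), hv, by
    simp only [Finset.smul_sum, smul_smul]⟩

lemma add_mem_coneHull {y z : E} (hy : y ∈ coneHull Ω) (hz : z ∈ coneHull Ω) :
    y + z ∈ coneHull Ω := by
  obtain ⟨k, c, v, hc, hv, rfl⟩ := hy
  obtain ⟨l, d, w, hd, hw, rfl⟩ := hz
  refine ⟨k + l, Fin.append c d, Fin.append v w, ?_, ?_, ?_⟩
  · intro i
    refine Fin.addCases (fun j => ?_) (fun j => ?_) i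
    · simpa using hc j
    · simpa using hd j
  · intro i
    refine Fin.addCases (fun j => ?_) (fun j => ?_) i
    · simpa using hv j
    · simpa using hw j
  · rw [Fin.sum_univ_add]
    simp

lemma convex_coneHull : Convex ℝ (coneHull Ω) := by
  intro y hy z hz a b ha hb _
  exact add_mem_coneHull (smul_mem_coneHull ha hy) (smul_mem_coneHull hb hz)

lemma mem_coneHull_of_mem {y : E} (hy : y ∈ Ω) : y ∈ coneHull Ω :=
  ⟨1, fun _ => 1, fun _ => y, fun _ => zero_le_one, fun _ => hy, by simp⟩

end Aux

variable {n : ℕ} {Ω : Set ((Fin n → ℝ) × ℝ)}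

lemma isClosed_cutClosure : IsClosed (cutClosure Ω) := by
  have : cutClosure Ω = ⋂ p ∈ Ω, {x : Fin n → ℝ | ∑ i, p.1 i * x i ≤ p.2} := by
    ext x; simp [cutClosure]
  rw [this]
  refine isClosed_biInter fun p _ => isClosed_le ?_ continuous_const
  exact continuous_finset_sum _ fun i _ => continuous_const.mul (continuous_apply i)

lemma convex_cutClosure : Convex ℝ (cutClosure Ω) := by
  intro x hx y hy a b ha hb hab
  intro p hp
  have h1 := hx p hp
  have h2 := hy p hp
  have : ∑ i, p.1 i * (a * x i + b * y i) =
      a * ∑ i, p.1 i * x i + b * ∑ i, p.1 i * y i := by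
    rw [Finset.mul_sum, Finset.mul_sum, ← Finset.sum_add_distrib]
    exact Finset.sum_congr rfl fun i _ => by ring
  calc ∑ i, p.1 i * (a • x + b • y) i = ∑ i, p.1 i * (a * x i + b * y i) := by
        simp [Pi.smul_apply, smul_eq_mul]
    _ = a * ∑ i, p.1 i * x i + b * ∑ i, p.1 i * y i := this
    _ ≤ a * p.2 + b * p.2 := by
        gcongr
    _ = p.2 := by rw [← add_mul, hab, one_mul]

lemma valid_of_mem_coneHull {q : (Fin n → ℝ) × ℝ} (hq : q ∈ coneHull Ω)
    {x : Fin n → ℝ} (hx : x ∈ cutClosure Ω) : ∑ i, q.1 i * x i ≤ q.2 := by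
  obtain ⟨k, c, v, hc, hv, rfl⟩ := hq
  have h1 : (∑ i, c i • v i).1 = fun j => ∑ i, c i * (v i).1 j := by
    funext j
    rw [Prod.fst_sum]
    simp
  have h2 : (∑ i, c i • v i).2 = ∑ i, c i * (v i).2 := by
    rw [Prod.snd_sum]; simp
  rw [h1, h2]
  calc ∑ j, (∑ i, c i * (v i).1 j) * x j
      = ∑ i, c i * ∑ j, (v i).1 j * x j := by
        simp only [Finset.sum_mul]
        rw [Finset.sum_comm]
        refine Finset.sum_congr rfl fun i _ => ?_
        rw [Finset.mul_sum]
        exact Finset.sum_congr rfl fun j _ => by ring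
    _ ≤ ∑ i, c i * (v i).2 := by
        gcongr with i
        · exact hc i
        · exact hx (v i) (hv i)

lemma valid_of_mem_closure {q : (Fin n → ℝ) × ℝ} (hq : q ∈ closure (coneHull Ω))
    {x : Fin n → ℝ} (hx : x ∈ cutClosure Ω) : ∑ i, q.1 i * x i ≤ q.2 := by
  have hT : IsClosed {q : (Fin n → ℝ) × ℝ | ∑ i, q.1 i * x i ≤ q.2} := by
    refine isClosed_le ?_ continuous_snd
    exact continuous_finset_sum _ fun i _ =>
      ((continuous_apply i).comp continuous_fst).mul continuous_const
  exact closure_minimal (fun p hp => valid_of_mem_coneHull hp hx) hT hq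

/-- Farkas-type lemma: every valid inequality lies in the closed conical hull. -/
lemma farkas (hΩ : ((0 : Fin n → ℝ), (1 : ℝ)) ∈ Ω) (hne : (cutClosure Ω).Nonempty)
    (α : Fin n → ℝ) (β : ℝ) (hv : ∀ x ∈ cutClosure Ω, ∑ i, α i * x i ≤ β) :
    (α, β) ∈ closure (coneHull Ω) := by
  by_contra hmem
  obtain ⟨f, u, hfu, huf⟩ := geometric_hahn_banach_closed_point
    (convex_coneHull.closure) isClosed_closure hmem
  -- u > 0 since 0 ∈ closure coneHull
  have hu0 : (0 : ℝ) < u := by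
    have := hfu 0 (subset_closure zero_mem_coneHull)
    simpa using this
  -- f ≤ 0 on coneHull
  have hfle : ∀ a ∈ coneHull Ω, f a ≤ 0 := by
    intro a ha
    by_contra h
    push_neg at h
    have hmem' : ((u + 1) / f a) • a ∈ coneHull Ω :=
      smul_mem_coneHull (by positivity) ha
    have := hfu _ (subset_closure hmem')
    rw [map_smul, smul_eq_mul, div_mul_cancel₀ _ (ne_of_gt h)] at this
    linarith
  set xh : Fin n → ℝ := fun i => f ((Pi.single i 1 : Fin n → ℝ), 0) with hxh
  set t : ℝ := f ((0 : Fin n → ℝ), 1) with ht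
  -- decomposition of f
  have hdec : ∀ a : Fin n → ℝ, ∀ b : ℝ, f (a, b) = (∑ i, a i * xh i) + b * t := by
    intro a b
    have h1 : (a, b) = ((a, 0) : (Fin n → ℝ) × ℝ) + (0, b) := by simp
    have h2 : ((a, (0:ℝ)) : (Fin n → ℝ) × ℝ) = ∑ i, a i • ((Pi.single i 1 : Fin n → ℝ), (0:ℝ)) := by
      ext j
      · simp only [Prod.fst_sum]
        rw [Finset.sum_apply]
        simp [Pi.single_apply, Finset.sum_ite_eq, eq_comm]
      · simp [Prod.snd_sum]
    have h3 : ((0 : Fin n → ℝ), b) = b • ((0 : Fin n → ℝ), (1:ℝ)) := by simp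
    rw [h1, map_add, h2, h3, map_sum, map_smul]
    simp only [smul_eq_mul]
    congr 1
    exact Finset.sum_congr rfl fun i _ => by rw [map_smul, smul_eq_mul]
  have ht0 : t ≤ 0 := hfle _ (mem_coneHull_of_mem hΩ)
  have hΩle : ∀ p ∈ Ω, (∑ i, p.1 i * xh i) + p.2 * t ≤ 0 := by
    intro p hp
    have := hfle p (mem_coneHull_of_mem hp)
    rwa [show p = (p.1, p.2) from rfl, hdec] at this
  have hαβ : (∑ i, α i * xh i) + β * t > 0 := by
    have h := huf
    rw [hdec α β] at h
    linarith
  rcases eq_or_lt_of_le ht0 with heq | hlt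
  · -- t = 0 case
    obtain ⟨z, hz⟩ := id hne
    rw [heq, mul_zero, add_zero] at hαβ
    have hA : (0:ℝ) < ∑ i, α i * xh i := hαβ
    set A := ∑ i, α i * xh i
    set C := ∑ i, α i * z i
    have hC : C ≤ β := hv z hz
    set s : ℝ := (β - C + 1) / A with hs
    have hs0 : 0 ≤ s := div_nonneg (by linarith) hA.le
    have hzs : z + s • xh ∈ cutClosure Ω := by
      intro p hp
      have h1 := hz p hp
      have h2 := hΩle p hp
      rw [heq, mul_zero, add_zero] at h2
      have h2' : ∑ i, p.1 i * xh i ≤ 0 := h2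
      have : ∑ i, p.1 i * (z + s • xh) i = (∑ i, p.1 i * z i) + s * ∑ i, p.1 i * xh i := by
        rw [Finset.mul_sum, ← Finset.sum_add_distrib]
        exact Finset.sum_congr rfl fun i _ => by simp [Pi.smul_apply, smul_eq_mul]; ring
      rw [this]
      nlinarith
    have := hv _ hzs
    have hcalc : ∑ i, α i * (z + s • xh) i = C + s * A := by
      rw [Finset.mul_sum, ← Finset.sum_add_distrib]
      exact Finset.sum_congr rfl fun i _ => by simp [Pi.smul_apply, smul_eq_mul]; ring
    rw [hcalc] at this
    rw [hs, div_mul_cancel₀ _ (ne_of_gt hA)] at this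
    linarith
  · -- t < 0 case
    set x' : Fin n → ℝ := (-t)⁻¹ • xh with hx'
    have hnt : (0:ℝ) < -t := by linarith
    have hx'mem : x' ∈ cutClosure Ω := by
      intro p hp
      have h2 := hΩle p hp
      have : ∑ i, p.1 i * x' i = (-t)⁻¹ * ∑ i, p.1 i * xh i := by
        rw [Finset.mul_sum]
        exact Finset.sum_congr rfl fun i _ => by simp [hx', Pi.smul_apply, smul_eq_mul]; ring
      rw [this]
      rw [inv_mul_le_iff₀ hnt]
      nlinarith
    have hv' := hv _ hx'mem
    have : ∑ i, α i * x' i = (-t)⁻¹ * ∑ i, α i * xh i := by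
      rw [Finset.mul_sum]
      exact Finset.sum_congr rfl fun i _ => by simp [hx', Pi.smul_apply, smul_eq_mul]; ring
    rw [this] at hv'
    rw [inv_mul_le_iff₀ hnt] at hv'
    nlinarith

/-- Corollary: 𝓘(Ω) is full-dimensional iff cl cone(Ω) is pointed. -/
theorem fullDim_iff_pointed {n : ℕ} (Ω : Set ((Fin n → ℝ) × ℝ))
    (hΩ : ((0 : Fin n → ℝ), (1 : ℝ)) ∈ Ω)
    (hne : (cutClosure Ω).Nonempty) :
    (interior (cutClosure Ω)).Nonempty ↔
      closure (coneHull Ω) ∩ (-(closure (coneHull Ω))) = {0} := by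
  constructor
  · rintro ⟨x₀, hx₀⟩
    apply Set.eq_singleton_iff_unique_mem.mpr
    constructor
    · refine ⟨subset_closure zero_mem_coneHull, ?_⟩
      simp only [Set.mem_neg, neg_zero]
      exact subset_closure zero_mem_coneHull
    · rintro p ⟨hp1, hp2⟩
      rw [Set.mem_neg] at hp2
      -- p.1 · x = p.2 for every x ∈ cutClosure
      have heq : ∀ x ∈ cutClosure Ω, ∑ i, p.1 i * x i = p.2 := by
        intro x hx
        have h1 := valid_of_mem_closure hp1 hx
        have h2 := valid_of_mem_closure hp2 hx
        simp only [Prod.fst_neg, Prod.snd_neg, Pi.neg_apply, neg_mul] at h2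
        rw [Finset.sum_neg_distrib] at h2
        linarith
      obtain ⟨ε, hε, hball⟩ := Metric.isOpen_iff.mp isOpen_interior x₀ hx₀
      have hball' : Metric.ball x₀ ε ⊆ cutClosure Ω :=
        fun y hy => interior_subset (hball hy)
      have hx₀mem : x₀ ∈ cutClosure Ω := hball' (Metric.mem_ball_self hε)
      have hzero : ∀ i, p.1 i = 0 := by
        intro i
        set y : Fin n → ℝ := x₀ + (ε/2) • (Pi.single i 1 : Fin n → ℝ) with hy
        have hymem : y ∈ Metric.ball x₀ ε := by
          rw [Metric.mem_ball, dist_eq_norm]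
          have : y - x₀ = (ε/2) • (Pi.single i 1 : Fin n → ℝ) := by
            rw [hy]; exact add_sub_cancel_left x₀ _
          rw [this]
          have hle : ‖(ε/2) • (Pi.single i 1 : Fin n → ℝ)‖ ≤ ε/2 := by
            refine (pi_norm_le_iff_of_nonneg (by positivity)).mpr fun j => ?_
            simp only [Pi.smul_apply, smul_eq_mul, Real.norm_eq_abs]
            rcases eq_or_ne j i with rfl | hji
            · simp [abs_of_nonneg (le_of_lt (half_pos hε))]
            · simp [Pi.single_eq_of_ne hji, le_of_lt (half_pos hε)]
          linarith
        have h1 := heq x₀ hx₀mem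
        have h2 := heq y (hball' hymem)
        have hsum : ∑ j, p.1 j * y j = (∑ j, p.1 j * x₀ j) + (ε/2) * p.1 i := by
          have hstep : ∀ j, p.1 j * y j
              = p.1 j * x₀ j + (ε/2) * (p.1 j * (Pi.single i 1 : Fin n → ℝ) j) := by
            intro j; rw [hy]; simp [Pi.smul_apply, smul_eq_mul]; ring
          rw [Finset.sum_congr rfl fun j _ => hstep j, Finset.sum_add_distrib]
          congr 1
          rw [← Finset.mul_sum]
          congr 1
          rw [Finset.sum_eq_single i]
          · simp
          · intro j _ hji; simp [Pi.single_eq_of_ne hji]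
          · intro h; exact absurd (Finset.mem_univ i) h
        rw [hsum, h1] at h2
        have : (ε/2) * p.1 i = 0 := by linarith
        rcases mul_eq_zero.mp this with h | h
        · exact absurd h (by positivity)
        · exact h
      have hp2eq : p.2 = 0 := by
        have := heq x₀ hx₀mem
        simp [hzero] at this
        exact this.symm
      ext
      · simp [hzero]
      · simp [hp2eq]
  · intro hpointed
    by_contra hint
    rw [Set.not_nonempty_iff_eq_empty] at hint
    -- cutClosure is contained in a hyperplane
    have hconv : Convex ℝ (cutClosure Ω) := convex_cutClosure
    have hspan : affineSpan ℝ (cutClosure Ω) ≠ ⊤ := by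
      intro h
      have := hconv.interior_nonempty_iff_affineSpan_eq_top.mpr h
      rw [hint] at this
      exact Set.not_nonempty_empty this
    obtain ⟨z, hz⟩ := id hne
    have hdir : (affineSpan ℝ (cutClosure Ω)).direction ≠ ⊤ := by
      intro h
      exact hspan ((AffineSubspace.direction_eq_top_iff_of_nonempty
        ((affineSpan_nonempty ℝ).mpr hne)).mp h)
    obtain ⟨φ, hφne, hφbot⟩ := Submodule.exists_dual_map_eq_bot_of_lt_top
      (lt_top_iff_ne_top.mpr hdir) inferInstance
    have hφW : ∀ w ∈ (affineSpan ℝ (cutClosure Ω)).direction, φ w = 0 := by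
      intro w hw
      have : φ w ∈ (affineSpan ℝ (cutClosure Ω)).direction.map φ :=
        Submodule.mem_map_of_mem hw
      rw [hφbot] at this
      simpa using this
    set α : Fin n → ℝ := fun i => φ (Pi.single i 1) with hα
    have hφeq : ∀ x : Fin n → ℝ, φ x = ∑ i, α i * x i := by
      intro x
      rw [LinearMap.pi_apply_eq_sum_univ φ x]
      refine Finset.sum_congr rfl fun i _ => ?_
      rw [smul_eq_mul, mul_comm]
      congr 1
      rw [hα]
      congr 1
      funext j
      simp [Pi.single_apply, eq_comm]
    set β : ℝ := φ z with hβ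
    have hconst : ∀ x ∈ cutClosure Ω, ∑ i, α i * x i = β := by
      intro x hx
      have hmem : x - z ∈ (affineSpan ℝ (cutClosure Ω)).direction := by
        have h1 : x ∈ affineSpan ℝ (cutClosure Ω) := subset_affineSpan ℝ _ hx
        have h2 : z ∈ affineSpan ℝ (cutClosure Ω) := subset_affineSpan ℝ _ hz
        simpa using AffineSubspace.vsub_mem_direction h1 h2
      have := hφW _ hmem
      rw [map_sub] at this
      rw [← hφeq]
      rw [hβ]
      linarith
    have hval1 : (α, β) ∈ closure (coneHull Ω) :=
      farkas hΩ ⟨z, hz⟩ α β fun x hx => le_of_eq (hconst x hx)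
    have hval2 : (-α, -β) ∈ closure (coneHull Ω) :=
      farkas hΩ ⟨z, hz⟩ (-α) (-β) fun x hx => by
        have := hconst x hx
        simp only [Pi.neg_apply, neg_mul]
        rw [Finset.sum_neg_distrib]
        linarith
    have hmem : (α, β) ∈ closure (coneHull Ω) ∩ (-(closure (coneHull Ω))) := by
      refine ⟨hval1, ?_⟩
      rw [Set.mem_neg]
      have : -(α, β) = ((-α, -β) : (Fin n → ℝ) × ℝ) := by simp [Prod.neg_mk]
      rw [this]
      exact hval2
    rw [hpointed] at hmem
    have hα0 : α = 0 := congrArg Prod.fst (Set.mem_singleton_iff.mp hmem)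
    apply hφne
    refine LinearMap.ext fun x => ?_
    rw [hφeq]
    simp [hα0]
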